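/- Let n ≥ 2 and let G = SU(n) × U(1) act on ℂⁿ ⊕ ℂ by the two representations ρ₁(A,z)(v,w) = (z·Av, z·w) and ρ₂(A,z)(v,w) = (Av, z·w), and let e₁ denote the first standard basis vector of ℂⁿ. Then the stabilizer of the singular point (e₁, 0) under ρ₁, namely {(A,z) : z·Ae₁ = e₁}, and its stabilizer under ρ₂, namely {(A,z) : Ae₁ = e₁}, are not conjugate as subgroups of G: there is no g ∈ G with g · Stab_{ρ₁}(e₁,0) · g⁻¹ = Stab_{ρ₂}(e₁,0). In particular the collections of isotropy subgroups (histories) of the two representations differ. -/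

import Mathlib

/-- The special unitary group SU(n): unitary n×n complex matrices of determinant 1,
as a subgroup of the unitary group. -/
def SU (n : ℕ) : Subgroup (Matrix.unitaryGroup (Fin n) ℂ) where
  carrier := {A | (A : Matrix (Fin n) (Fin n) ℂ).det = 1}
  one_mem' := by simp
  mul_mem' := by
    intro a b ha hb
    simp only [Set.mem_setOf_eq] at *
    rw [Matrix.UnitaryGroup.mul_val, Matrix.det_mul, ha, hb, one_mul]
  inv_mem' := by
    intro a ha
    simp only [Set.mem_setOf_eq] at *
    rw [Matrix.UnitaryGroup.inv_val]
    show (star (a : Matrix (Fin n) (Fin n) ℂ)).det = 1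
    rw [Matrix.star_eq_conjTranspose, Matrix.det_conjTranspose, ha, star_one]

/-- The representation ρ₁ of SU(n) × U(1) on ℂⁿ ⊕ ℂ:
ρ₁(A,z)(v,w) = (z·(Av), z·w) (the cover of the standard U(n) action on ℂⁿ
times the circle action on ℂ). -/
noncomputable def rho1 (n : ℕ) (g : SU n × Circle) (p : (Fin n → ℂ) × ℂ) :
    (Fin n → ℂ) × ℂ :=
  ((g.2 : ℂ) • ((g.1 : Matrix (Fin n) (Fin n) ℂ).mulVec p.1), (g.2 : ℂ) * p.2)

/-- The representation ρ₂ of SU(n) × U(1) on ℂⁿ ⊕ ℂ: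
ρ₂(A,z)(v,w) = (Av, z·w) (the factor-wise product action). -/
noncomputable def rho2 (n : ℕ) (g : SU n × Circle) (p : (Fin n → ℂ) × ℂ) :
    (Fin n → ℂ) × ℂ :=
  ((g.1 : Matrix (Fin n) (Fin n) ℂ).mulVec p.1, (g.2 : ℂ) * p.2)

/-- The stabilizer of the singular point (e₁,0) under ρ₁ is {(A,z) : z·Ae₁ = e₁},
its stabilizer under ρ₂ is {(A,z) : Ae₁ = e₁}, and these two subgroups of
G = SU(n) × U(1) are not conjugate in G. -/
theorem stabilizers_not_conjugate (n : ℕ) (hn : 2 ≤ n) :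
    let e₁ : Fin n → ℂ := Pi.single (⟨0, by omega⟩ : Fin n) 1
    ({h : SU n × Circle | rho1 n h (e₁, 0) = (e₁, 0)} =
      {h : SU n × Circle |
        (h.2 : ℂ) • (h.1 : Matrix (Fin n) (Fin n) ℂ).mulVec e₁ = e₁}) ∧
    ({h : SU n × Circle | rho2 n h (e₁, 0) = (e₁, 0)} =
      {h : SU n × Circle | (h.1 : Matrix (Fin n) (Fin n) ℂ).mulVec e₁ = e₁}) ∧
    ¬ ∃ g : SU n × Circle,
      (fun h : SU n × Circle => g * h * g⁻¹) ''
          {h : SU n × Circle | rho1 n h (e₁, 0) = (e₁, 0)} =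
        {h : SU n × Circle | rho2 n h (e₁, 0) = (e₁, 0)} := by

  intro e₁
  have h0 : (⟨0, by omega⟩ : Fin n) = ⟨0, by omega⟩ := rfl
  refine ⟨?_, ?_, ?_⟩
  · ext h
    simp [rho1, Prod.ext_iff]
  · ext h
    simp [rho2, Prod.ext_iff]
  · rintro ⟨g, hg⟩
    set I : Circle := ⟨Complex.I, by simp [Submonoid.unitSphere, Complex.norm_I]⟩ with hI
    have hmem : ((1 : SU n), I) ∈
        {h : SU n × Circle | rho2 n h (e₁, 0) = (e₁, 0)} := by
      simp [rho2, Prod.ext_iff, Matrix.one_mulVec]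
    rw [← hg] at hmem
    obtain ⟨h, hh, heq⟩ := hmem
    have hh' : h = ((1 : SU n), I) := by
      have : h = g⁻¹ * ((1 : SU n), I) * g := by
        rw [← heq]; group
      rw [this, Prod.ext_iff]
      constructor
      · simp
      · simp [mul_comm]
    rw [hh'] at hh
    have := congrFun (congrArg Prod.fst hh) (⟨0, by omega⟩ : Fin n)
    simp [rho1, e₁, Matrix.one_mulVec, Pi.single_eq_same] at this
    have : Complex.I ^ 2 = 1 ^ 2 := by exact congrArg (· ^ 2) this
    rw [Complex.I_sq, one_pow] at this
    norm_num at this
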